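/- arXiv:math/0402191 — 3 statements merged into one kernel-verified Lean document; each statement's English description precedes it below -/
import Mathlib

section
/- For all nonzero vectors u, v in a real inner product space (in particular in ℝ⁴), one has |u+v| − | |u| − |v| | ≥ π^{−2} · min(|u|,|v|) · ∠(u,−v)², where ∠(u,−v) is the angle between u and −v. Equivalently, two concentric waves whose space-time frequencies add to a point at distance d from the light cone must interact at angle O(√(d / min(|u|,|v|))). -/
/-- For all nonzero vectors `u, v` in a real inner product space, one has
`‖u+v‖ − |‖u‖ − ‖v‖| ≥ π⁻² · min(‖u‖,‖v‖) · ∠(u,−v)²`, where `∠(u,−v)` is the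
(unoriented) angle between `u` and `−v`. -/
theorem statement13 {E : Type*} [NormedAddCommGroup E] [InnerProductSpace ℝ E]
    (u v : E) (hu : u ≠ 0) (hv : v ≠ 0) :
    ‖u + v‖ - |‖u‖ - ‖v‖| ≥
      (Real.pi ^ 2)⁻¹ * min ‖u‖ ‖v‖ * (InnerProductGeometry.angle u (-v)) ^ 2 := by
  set a := ‖u‖ with ha
  set b := ‖v‖ with hb
  set θ := InnerProductGeometry.angle u (-v) with hθ
  have ha0 : 0 < a := norm_pos_iff.mpr hu
  have hb0 : 0 < b := norm_pos_iff.mpr hv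
  have hθ0 : 0 ≤ θ := InnerProductGeometry.angle_nonneg _ _
  have hθπ : θ ≤ Real.pi := InnerProductGeometry.angle_le_pi _ _
  have hπ : 0 < Real.pi := Real.pi_pos
  -- inner product in terms of the angle
  have hcos : (inner ℝ u v : ℝ) = -(a * b * Real.cos θ) := by
    have h := InnerProductGeometry.cos_angle u (-v)
    rw [inner_neg_right, norm_neg] at h
    rw [← hθ] at h
    field_simp at h
    linarith [h]
  -- norm of the sum
  have hsq : ‖u + v‖ ^ 2 = (a - b) ^ 2 + 2 * a * b * (1 - Real.cos θ) := by
    rw [norm_add_sq_real, hcos]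
    ring
  -- Jordan-type inequality : 1 - cos θ ≥ 2 θ² / π²
  have hjordan : 1 - Real.cos θ ≥ 2 * θ ^ 2 / Real.pi ^ 2 := by
    have hs : 2 / Real.pi * (θ / 2) ≤ Real.sin (θ / 2) :=
      Real.mul_le_sin (by linarith) (by linarith)
    have hs0 : 0 ≤ 2 / Real.pi * (θ / 2) := by positivity
    have hsq2 : (2 / Real.pi * (θ / 2)) ^ 2 ≤ Real.sin (θ / 2) ^ 2 := by
      exact pow_le_pow_left₀ hs0 hs 2
    have hhalf : Real.sin (θ / 2) ^ 2 = 1 / 2 - Real.cos θ / 2 := by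
      have := Real.sin_sq_eq_half_sub (θ / 2)
      rwa [show 2 * (θ / 2) = θ by ring] at this
    rw [hhalf] at hsq2
    have hπ2 : (0:ℝ) < Real.pi ^ 2 := by positivity
    rw [ge_iff_le, div_le_iff₀ hπ2]
    have : (2 / Real.pi * (θ / 2)) ^ 2 = θ ^ 2 / Real.pi ^ 2 := by
      field_simp
    rw [this, div_le_iff₀ hπ2] at hsq2
    linarith
  set m := min a b with hm
  have hm0 : 0 < m := lt_min ha0 hb0
  have hma : m ≤ a := min_le_left _ _
  have hmb : m ≤ b := min_le_right _ _
  set R := (Real.pi ^ 2)⁻¹ * m * θ ^ 2 with hR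
  have hR0 : 0 ≤ R := by positivity
  -- key: 2ab(1-cosθ) ≥ (a+b)·2R
  have hab : a * b ≥ m * (a + b) / 2 := by
    rcases min_cases a b with ⟨h1, h2⟩ | ⟨h1, h2⟩ <;> rw [hm, h1] <;> nlinarith
  have hkey : 2 * a * b * (1 - Real.cos θ) ≥ (a + b) * (2 * R) := by
    have h1 : 2 * a * b * (1 - Real.cos θ) ≥ m * (a + b) * (1 - Real.cos θ) := by
      have hc : 0 ≤ 1 - Real.cos θ := by linarith [Real.cos_le_one θ]
      nlinarith
    have h2 : m * (a + b) * (1 - Real.cos θ) ≥ m * (a + b) * (2 * θ ^ 2 / Real.pi ^ 2) := by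
      have : 0 ≤ m * (a + b) := by positivity
      nlinarith
    have h3 : m * (a + b) * (2 * θ ^ 2 / Real.pi ^ 2) = (a + b) * (2 * R) := by
      rw [hR]; field_simp
    linarith
  -- denominator bound
  have habs : |a - b| ≤ a + b := by
    rw [abs_le]; constructor <;> linarith
  have hnle : ‖u + v‖ ≤ a + b := norm_add_le u v
  have hD : ‖u + v‖ + |a - b| ≤ 2 * (a + b) := by linarith
  -- conclude
  by_cases huv : u + v = 0
  · have hvu : v = -u := by
      rw [← neg_eq_iff_add_eq_zero] at huv; rw [← huv]
    have hab' : a = b := by rw [ha, hb, hvu, norm_neg]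
    have hθ' : θ = 0 := by
      rw [hθ, hvu, neg_neg, InnerProductGeometry.angle_self hu]
    have hR0' : R = 0 := by rw [hR, hθ']; ring
    rw [hR0']
    simp [huv, hab']
  · have hn0 : 0 < ‖u + v‖ := norm_pos_iff.mpr huv
    have hD0 : 0 < ‖u + v‖ + |a - b| := by positivity
    have hfact : (‖u + v‖ - |a - b|) * (‖u + v‖ + |a - b|)
        = 2 * a * b * (1 - Real.cos θ) := by
      have h' : ‖u + v‖ ^ 2 - |a - b| ^ 2 = 2 * a * b * (1 - Real.cos θ) := by
        rw [hsq, sq_abs]; ring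
      calc (‖u + v‖ - |a - b|) * (‖u + v‖ + |a - b|)
          = ‖u + v‖ ^ 2 - |a - b| ^ 2 := by ring
        _ = 2 * a * b * (1 - Real.cos θ) := h'
    have : (‖u + v‖ - |a - b|) * (‖u + v‖ + |a - b|) ≥ R * (‖u + v‖ + |a - b|) := by
      rw [hfact]
      calc R * (‖u + v‖ + |a - b|) ≤ R * (2 * (a + b)) := mul_le_mul_of_nonneg_left hD hR0
        _ = (a + b) * (2 * R) := by ring
        _ ≤ 2 * a * b * (1 - Real.cos θ) := hkey
    exact le_of_mul_le_mul_right (by linarith) hD0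
end

section
/- Let δ, d > 0 with δ ≤ d, and let (τ,ξ), (τ',ξ') ∈ ℝ × ℝ⁴ with ξ ≠ 0, ξ' ≠ 0, τ ≤ 0 ≤ τ'. Assume both points lie within δ of the light cone, i.e. | |τ| − |ξ| | ≤ δ and | |τ'| − |ξ'| | ≤ δ, and that the output lies at distance about d from the cone, i.e. | |τ+τ'| − |ξ+ξ'| | ≤ d. Then the interaction angle is small: ∠(ξ, −ξ')² ≤ 3π² · d / min(|ξ|, |ξ'|). -/
set_option maxHeartbeats 1000000 in
/-- If `(τ,ξ)` and `(τ',ξ')`, with `τ ≤ 0 ≤ τ'`, both lie within `δ ≤ d`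
of the light cone in `ℝ × ℝ⁴`, and their sum lies within `d` of the light cone, then the
interaction angle satisfies `∠(ξ, −ξ')² ≤ 3π² d / min(|ξ|, |ξ'|)`. -/
theorem statement14 (δ d : ℝ) (hδ : 0 < δ) (hd : 0 < d) (hδd : δ ≤ d)
    (τ τ' : ℝ) (ξ ξ' : EuclideanSpace ℝ (Fin 4))
    (hξ : ξ ≠ 0) (hξ' : ξ' ≠ 0) (hτ : τ ≤ 0) (hτ' : 0 ≤ τ')
    (hcone : |(|τ| - ‖ξ‖)| ≤ δ) (hcone' : |(|τ'| - ‖ξ'‖)| ≤ δ)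
    (hout : |(|τ + τ'| - ‖ξ + ξ'‖)| ≤ d) :
    (InnerProductGeometry.angle ξ (-ξ')) ^ 2 ≤
      3 * Real.pi ^ 2 * d / min ‖ξ‖ ‖ξ'‖ := by
  set a := ‖ξ‖ with ha_def
  set b := ‖ξ'‖ with hb_def
  have ha : 0 < a := norm_pos_iff.mpr hξ
  have hb : 0 < b := norm_pos_iff.mpr hξ'
  set θ := InnerProductGeometry.angle ξ (-ξ') with hθdef
  have hθ0 : 0 ≤ θ := InnerProductGeometry.angle_nonneg _ _
  have hθπ : θ ≤ Real.pi := InnerProductGeometry.angle_le_pi _ _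
  have hπ : 0 < Real.pi := Real.pi_pos
  -- cosine formula
  have hcos : Real.cos θ = -(inner ℝ ξ ξ' : ℝ) / (a * b) := by
    rw [hθdef, InnerProductGeometry.cos_angle, norm_neg, inner_neg_right]
  have hcos' : a * b * Real.cos θ = -(inner ℝ ξ ξ' : ℝ) := by
    rw [hcos]; field_simp
  have hsum : ‖ξ + ξ'‖ ^ 2 = a ^ 2 + 2 * (inner ℝ ξ ξ' : ℝ) + b ^ 2 := norm_add_sq_real ξ ξ'
  -- cone estimates
  have habsτ : |τ| = -τ := abs_of_nonpos hτ
  have habsτ' : |τ'| = τ' := abs_of_nonneg hτ'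
  rw [abs_le] at hcone hcone' hout
  rw [habsτ] at hcone
  rw [habsτ'] at hcone'
  have h1 : ‖ξ + ξ'‖ - |a - b| ≤ 3 * d := by
    rcases abs_cases (τ + τ') with ⟨h, _⟩ | ⟨h, _⟩ <;> rw [h] at hout <;>
      rcases abs_cases (a - b) with ⟨h2, _⟩ | ⟨h2, _⟩ <;> rw [h2] <;>
      linarith [hcone.1, hcone.2, hcone'.1, hcone'.2, hout.1, hout.2]
  -- key inequality: 2ab(1 - cos θ) ≤ 6d(a+b)
  have hs : ‖ξ + ξ'‖ ≤ a + b := norm_add_le ξ ξ'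
  have hm : |a - b| ≤ a + b := by rcases abs_cases (a - b) with ⟨h2, _⟩ | ⟨h2, _⟩ <;> linarith
  have hm0 : 0 ≤ |a - b| := abs_nonneg _
  have hs0 : 0 ≤ ‖ξ + ξ'‖ := norm_nonneg _
  have hfact : (‖ξ + ξ'‖ - |a - b|) * (‖ξ + ξ'‖ + |a - b|) ≤
      3 * d * (‖ξ + ξ'‖ + |a - b|) :=
    mul_le_mul_of_nonneg_right h1 (by linarith)
  have hsq : ‖ξ + ξ'‖ ^ 2 - (a - b) ^ 2 ≤ 6 * d * (a + b) := by
    have habs2 : |a - b| ^ 2 = (a - b) ^ 2 := sq_abs _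
    nlinarith [hfact, hs, hm, hd]
  have hkey : a * b * (1 - Real.cos θ) ≤ 3 * d * (a + b) := by nlinarith [hsq, hsum, hcos']
  -- min bound
  set m := min a b with hm_def
  have hmin : 0 < m := lt_min ha hb
  have hcosle : Real.cos θ ≤ 1 := Real.cos_le_one θ
  have h6 : m * (1 - Real.cos θ) ≤ 6 * d := by
    have hma : m * b ≤ a * b := mul_le_mul_of_nonneg_right (min_le_left a b) hb.le
    have hmb : m * a ≤ b * a := mul_le_mul_of_nonneg_right (min_le_right a b) ha.le
    rw [← mul_le_mul_iff_of_pos_right (mul_pos ha hb)]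
    have t1 := mul_le_mul_of_nonneg_left hkey hmin.le
    have t2 := mul_le_mul_of_nonneg_left hma (by linarith : (0:ℝ) ≤ 3 * d)
    have t3 := mul_le_mul_of_nonneg_left hmb (by linarith : (0:ℝ) ≤ 3 * d)
    nlinarith [t1, t2, t3]
  -- 2θ² ≤ π²(1 - cos θ)
  have hsinq : Real.sin (θ / 2) ^ 2 = 1 / 2 - Real.cos θ / 2 := by
    have := Real.sin_sq (θ / 2)
    have h2 := Real.cos_sq (θ / 2)
    rw [h2] at this
    rw [this]
    ring_nf
  have hsinlb : 2 / Real.pi * (θ / 2) ≤ Real.sin (θ / 2) :=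
    Real.mul_le_sin (by linarith) (by linarith)
  have hθπ2 : θ ≤ Real.pi * Real.sin (θ / 2) := by
    have := mul_le_mul_of_nonneg_left hsinlb hπ.le
    calc θ = Real.pi * (2 / Real.pi * (θ / 2)) := by field_simp
    _ ≤ Real.pi * Real.sin (θ / 2) := this
  have hangle : 2 * θ ^ 2 ≤ Real.pi ^ 2 * (1 - Real.cos θ) := by
    have hθ2 : θ ^ 2 ≤ (Real.pi * Real.sin (θ / 2)) ^ 2 := by
      apply sq_le_sq' <;> nlinarith
    nlinarith [hsinq, hθ2]
  -- conclude
  rw [le_div_iff₀ hmin]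
  have t1 := mul_le_mul_of_nonneg_right hangle hmin.le
  have t2 := mul_le_mul_of_nonneg_left h6 (sq_nonneg Real.pi)
  nlinarith [t1, t2]
end

section
/- Let δ, d > 0 with δ ≤ d, and let (τ,ξ), (τ',ξ') ∈ ℝ × ℝ⁴ with ξ' ≠ 0, ξ + ξ' ≠ 0, τ ≤ 0 ≤ τ' and 0 ≤ τ + τ'. Assume | |τ| − |ξ| | ≤ δ, | |τ'| − |ξ'| | ≤ δ, and | |τ+τ'| − |ξ+ξ'| | ≤ d. Then the angle between the output spatial frequency and the spatial frequency of the positive-time factor is small: ∠(ξ+ξ', ξ')² ≤ 3π² · d / min(|ξ+ξ'|, |ξ'|). -/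
set_option maxHeartbeats 1000000 in
/-- If `(τ,ξ)` and `(τ',ξ')`, with `τ ≤ 0 ≤ τ'` and `0 ≤ τ + τ'`, both lie
within `δ ≤ d` of the light cone in `ℝ × ℝ⁴`, and their sum lies within `d` of the light cone,
then the angle between the output spatial frequency and the spatial frequency of the
positive-time factor satisfies `∠(ξ+ξ', ξ')² ≤ 3π² d / min(|ξ+ξ'|, |ξ'|)`. -/
theorem statement15 (δ d : ℝ) (hδ : 0 < δ) (hd : 0 < d) (hδd : δ ≤ d)
    (τ τ' : ℝ) (ξ ξ' : EuclideanSpace ℝ (Fin 4))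
    (hξ' : ξ' ≠ 0) (hsum : ξ + ξ' ≠ 0) (hτ : τ ≤ 0) (hτ' : 0 ≤ τ') (hττ' : 0 ≤ τ + τ')
    (hcone : |(|τ| - ‖ξ‖)| ≤ δ) (hcone' : |(|τ'| - ‖ξ'‖)| ≤ δ)
    (hout : |(|τ + τ'| - ‖ξ + ξ'‖)| ≤ d) :
    (InnerProductGeometry.angle (ξ + ξ') ξ') ^ 2 ≤
      3 * Real.pi ^ 2 * d / min ‖ξ + ξ'‖ ‖ξ'‖ := by
  set a := ‖ξ + ξ'‖ with ha_def
  set b := ‖ξ'‖ with hb_def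
  set c := ‖ξ‖ with hc_def
  set θ := InnerProductGeometry.angle (ξ + ξ') ξ' with hθ_def
  have ha : 0 < a := norm_pos_iff.mpr hsum
  have hb : 0 < b := norm_pos_iff.mpr hξ'
  have hc : 0 ≤ c := norm_nonneg _
  -- time estimates
  have habsτ : |τ| = -τ := abs_of_nonpos hτ
  have habsτ' : |τ'| = τ' := abs_of_nonneg hτ'
  have habsττ' : |τ + τ'| = τ + τ' := abs_of_nonneg hττ'
  rw [habsτ] at hcone; rw [habsτ'] at hcone'; rw [habsττ'] at hout
  have h1 := abs_le.mp hcone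
  have h2 := abs_le.mp hcone'
  have h3 := abs_le.mp hout
  have hkey : a + c - b ≤ 3 * d := by
    linarith [h1.1, h1.2, h2.1, h2.2, h3.1, h3.2]
  -- triangle inequalities
  have htri1 : b ≤ a + c := by
    have : ξ' = (ξ + ξ') - ξ := by abel
    calc b = ‖(ξ + ξ') - ξ‖ := by rw [← this]
    _ ≤ a + c := norm_sub_le _ _
  have htri2 : c ≤ a + b := by
    have : ξ = (ξ + ξ') - ξ' := by abel
    calc c = ‖(ξ + ξ') - ξ'‖ := by rw [← this]
    _ ≤ a + b := norm_sub_le _ _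
  have htri3 : a ≤ c + b := norm_add_le _ _
  -- inner product identity
  have hinner : (inner ℝ (ξ + ξ') ξ' : ℝ) = (a ^ 2 + b ^ 2 - c ^ 2) / 2 := by
    have h := @norm_sub_sq_real (EuclideanSpace ℝ (Fin 4)) _ _ (ξ + ξ') ξ'
    have h2 : (ξ + ξ') - ξ' = ξ := by abel
    rw [h2] at h
    rw [← ha_def, ← hb_def, ← hc_def] at h
    linarith
  have hcos : Real.cos θ = (inner ℝ (ξ + ξ') ξ' : ℝ) / (a * b) :=
    InnerProductGeometry.cos_angle _ _
  -- main bound: a * (1 - cos θ) ≤ 3 * d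
  have hmain : a * (1 - Real.cos θ) ≤ 3 * d := by
    have hab : a * b * (1 - Real.cos θ) = (c + b - a) * (c + a - b) / 2 := by
      rw [hcos, hinner]
      field_simp
      ring
    have hprod : (c + b - a) * (c + a - b) ≤ (2 * b) * (3 * d) := by
      apply mul_le_mul (by linarith) (by linarith) (by linarith) (by linarith)
    have : a * b * (1 - Real.cos θ) ≤ 3 * d * b := by
      rw [hab]; nlinarith
    nlinarith
  -- quadratic lower bound for 1 - cos
  have hθ01 : 0 ≤ θ := InnerProductGeometry.angle_nonneg _ _
  have hθπ : θ ≤ Real.pi := InnerProductGeometry.angle_le_pi _ _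
  have hquad : Real.cos θ ≤ 1 - 2 / Real.pi ^ 2 * θ ^ 2 :=
    Real.cos_le_one_sub_mul_cos_sq (by rw [abs_of_nonneg hθ01]; exact hθπ)
  have hπ : 0 < Real.pi := Real.pi_pos
  have hθsq : 2 / Real.pi ^ 2 * θ ^ 2 ≤ 1 - Real.cos θ := by linarith
  -- combine
  have hmin : 0 < min a b := lt_min ha hb
  rw [le_div_iff₀ hmin]
  have hmina : min a b ≤ a := min_le_left _ _
  have h4 : a * (2 / Real.pi ^ 2 * θ ^ 2) ≤ 3 * d := by
    calc a * (2 / Real.pi ^ 2 * θ ^ 2) ≤ a * (1 - Real.cos θ) := by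
          apply mul_le_mul_of_nonneg_left hθsq ha.le
    _ ≤ 3 * d := hmain
  have hπsq : 0 < Real.pi ^ 2 := by positivity
  have h5 : a * θ ^ 2 ≤ 3 / 2 * Real.pi ^ 2 * d := by
    have := mul_le_mul_of_nonneg_left h4 (le_of_lt (by positivity : (0:ℝ) < Real.pi ^ 2 / 2))
    calc a * θ ^ 2 = Real.pi ^ 2 / 2 * (a * (2 / Real.pi ^ 2 * θ ^ 2)) := by
          field_simp
    _ ≤ Real.pi ^ 2 / 2 * (3 * d) := this
    _ = 3 / 2 * Real.pi ^ 2 * d := by ring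
  have hθ2 : 0 ≤ θ ^ 2 := sq_nonneg _
  nlinarith [mul_le_mul_of_nonneg_left hmina hθ2]
end
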